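/- arXiv:1707.05984 — 2 statements merged into one kernel-verified Lean document; each statement's English description precedes it below -/
import Mathlib

section
/- Let F_n = ⟨a_1, ..., a_n⟩ be the free group and (F, p) a pointed finite set. Let X = F^{(F_n)} be the set of finitely supported maps F_n → F with the left translation F_n-action, and let ψ : ⊕_{i=1}^n Z[X] → Z[X] be defined by ψ(f_1, ..., f_n) = Σ_{i=1}^n (f_i − a_i·f_i). Then the kernel of ψ equals the direct sum of n copies of Z·[1_p], where 1_p ∈ X is the constant map with value p. -/
/-- The set of finitely supported maps `F_n → F` relative to the base point `p`. -/
def FinSupp (n : ℕ) (F : Type) (p : F) : Type :=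
  {f : FreeGroup (Fin n) → F // {x : FreeGroup (Fin n) | f x ≠ p}.Finite}

/-- The left translation action of `F_n` on finitely supported maps:
`(w · f)(x) = f (w⁻¹ x)`. -/
instance FinSupp.instMulAction (n : ℕ) (F : Type) (p : F) :
    MulAction (FreeGroup (Fin n)) (FinSupp n F p) where
  smul w f := ⟨fun x => f.1 (w⁻¹ * x), by
    refine Set.Finite.subset (f.2.image (fun y => w * y)) ?_
    intro x hx
    exact ⟨w⁻¹ * x, hx, by group⟩⟩
  one_smul f := Subtype.ext (funext fun x => by
    show f.1 ((1 : FreeGroup (Fin n))⁻¹ * x) = f.1 x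
    simp)
  mul_smul u v f := Subtype.ext (funext fun x => by
    show f.1 ((u * v)⁻¹ * x) = f.1 (v⁻¹ * (u⁻¹ * x))
    rw [mul_inv_rev, mul_assoc])

/-- The constant map with value `p`. -/
def FinSupp.constP (n : ℕ) (F : Type) (p : F) : FinSupp n F p :=
  ⟨fun _ => p, by simp⟩

namespace KernelPsiAux

open FreeGroup List

variable {α : Type*} [DecidableEq α]

/-- no-cancellation relation between adjacent letters -/
def NR (a b : α × Bool) : Prop := ¬(a.1 = b.1 ∧ a.2 = !b.2)

lemma isRed_reduce (L : List (α × Bool)) : List.Chain' NR (reduce L) := by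
  induction L with
  | nil => exact List.isChain_nil
  | cons x L ih =>
    rw [reduce.cons]
    cases hL : reduce L with
    | nil => exact List.isChain_singleton _
    | cons hd tl =>
      rw [hL] at ih
      by_cases hx : x.1 = hd.1 ∧ x.2 = !hd.2
      · simpa [hx, List.Chain'] using ih.tail
      · simpa [hx, List.Chain'] using List.isChain_cons_cons.mpr ⟨hx, ih⟩

lemma reduce_eq_self {L : List (α × Bool)} (h : List.Chain' NR L) : reduce L = L := by
  induction L with
  | nil => rfl
  | cons x L ih =>
    have hL : reduce L = L := ih h.tail
    rw [reduce.cons, hL]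
    cases L with
    | nil => rfl
    | cons hd tl =>
      have hx : ¬(x.1 = hd.1 ∧ x.2 = !hd.2) := (List.isChain_cons_cons.mp h).1
      simp [hx]

lemma isRed_toWord (x : FreeGroup α) : List.Chain' NR x.toWord := by
  rw [← reduce_toWord]; exact isRed_reduce _

lemma toWord_mk_cons (x : α × Bool) (u : FreeGroup α)
    (h : ∀ y ∈ u.toWord.head?, ¬(x.1 = y.1 ∧ x.2 = !y.2)) :
    (mk [x] * u).toWord = x :: u.toWord := by
  conv_lhs => rw [← mk_toWord (x := u)]
  rw [mul_mk, toWord_mk]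
  exact reduce_eq_self (List.isChain_cons.mpr ⟨h, isRed_toWord u⟩)

lemma norm_mk_cons (x : α × Bool) (u : FreeGroup α)
    (h : ∀ y ∈ u.toWord.head?, ¬(x.1 = y.1 ∧ x.2 = !y.2)) :
    norm (mk [x] * u) = norm u + 1 := by
  simp only [FreeGroup.norm]
  rw [toWord_mk_cons x u h, List.length_cons]

lemma conj_pow' {G : Type*} [Group G] (a b : G) (k : ℕ) :
    (a * b * a⁻¹) ^ k = a * b ^ k * a⁻¹ := by
  induction k with
  | zero => simp
  | succ k ih => rw [pow_succ, pow_succ, ih]; group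

theorem pow_ne_one_aux :
    ∀ (N : ℕ) (u : FreeGroup α), norm u ≤ N → u ≠ 1 → ∀ k ≠ 0, u ^ k ≠ 1 := by
  intro N
  induction N with
  | zero =>
    intro u hN hu
    exact absurd (norm_eq_zero.mp (Nat.le_zero.mp hN)) hu
  | succ N ih =>
    intro u hN hu k hk
    obtain ⟨x, L', hL⟩ : ∃ x L', u.toWord = x :: L' := by
      cases h : u.toWord with
      | nil => exact absurd (toWord_eq_nil_iff.mp h) hu
      | cons a l => exact ⟨a, l, rfl⟩
    by_cases hc : u.toWord.getLast? = some (x.1, !x.2)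
    · -- boundary cancellation : u = a * v * a⁻¹
      have hL'ne : L' ≠ [] := by
        rintro rfl
        rw [hL] at hc
        simp at hc
        have := congrArg Prod.snd hc
        simp at this
      have hlast : L'.getLast hL'ne = (x.1, !x.2) := by
        rw [hL, List.getLast?_eq_getLast (l := x :: L') (by simp), List.getLast_cons hL'ne] at hc
        exact Option.some.inj hc
      set v : FreeGroup α := mk L'.dropLast with hv
      have hu_eq : u = mk [x] * v * (mk [x])⁻¹ := by
        rw [hv, mul_mk, inv_mk, mul_mk]
        have : invRev [x] = [(x.1, !x.2)] := rfl
        rw [this]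
        have : ([x] ++ L'.dropLast) ++ [(x.1, !x.2)] = x :: L' := by
          rw [← hlast]
          simp [List.dropLast_append_getLast hL'ne]
        rw [this, ← hL, mk_toWord]
      have hvne : v ≠ 1 := by
        intro h1
        rw [h1, mul_one, mul_inv_cancel] at hu_eq
        exact hu hu_eq
      have hvnorm : norm v ≤ N := by
        have h1 : norm v ≤ L'.dropLast.length := norm_mk_le
        have h2 : L'.dropLast.length = L'.length - 1 := by simp
        have h3 : norm u = L'.length + 1 := by
          simp only [FreeGroup.norm, hL, List.length_cons]
        omega
      have := ih v hvnorm hvne k hk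
      rw [hu_eq, conj_pow']
      intro hcon
      apply this
      have hvk : v ^ k = (mk [x])⁻¹ * (mk [x] * v ^ k * (mk [x])⁻¹) * mk [x] := by group
      rw [hvk, hcon]
      group
    · -- cyclically reduced case
      have key : ∀ m : ℕ, (u ^ (m + 1)).toWord.head? = some x ∧
          norm (u ^ (m + 1)) = (m + 1) * u.toWord.length := by
        intro m
        induction m with
        | zero => constructor
                  · rw [pow_one, hL]; rfl
                  · rw [pow_one]; simp [FreeGroup.norm]
        | succ m ihm =>
          have hmul : u ^ (m + 2) = mk (u.toWord ++ (u ^ (m + 1)).toWord) := by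
            rw [pow_succ', ← mul_mk, mk_toWord, mk_toWord]
          have hred : reduce (u.toWord ++ (u ^ (m + 1)).toWord)
              = u.toWord ++ (u ^ (m + 1)).toWord := by
            apply reduce_eq_self
            unfold List.Chain'
            rw [List.isChain_append]
            refine ⟨isRed_toWord u, isRed_toWord _, ?_⟩
            intro a ha b hb
            rw [ihm.1] at hb
            simp only [Option.mem_def, Option.some.injEq] at hb
            subst hb
            intro hab
            apply hc
            rw [ha]
            congr 1
            exact Prod.ext hab.1 hab.2
          have htw : (u ^ (m + 2)).toWord = u.toWord ++ (u ^ (m + 1)).toWord := by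
            rw [hmul, toWord_mk, hred]
          constructor
          · rw [htw, hL]; rfl
          · have h1 : norm (u ^ (m + 2)) = (u.toWord ++ (u ^ (m + 1)).toWord).length := by
              simp only [FreeGroup.norm, htw]
            rw [h1, List.length_append]
            have h2 := ihm.2
            simp only [FreeGroup.norm] at h2 ⊢
            rw [h2]; ring
      obtain ⟨m, rfl⟩ : ∃ m, k = m + 1 := ⟨k - 1, by omega⟩
      intro hcon
      have h2 := (key m).2
      rw [hcon] at h2
      simp only [FreeGroup.norm, toWord_one, List.length_nil] at h2
      have hlen : u.toWord.length ≠ 0 := by rw [hL]; simp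
      rcases Nat.mul_eq_zero.mp h2.symm with h | h
      · omega
      · exact hlen h

theorem pow_ne_one {u : FreeGroup α} (hu : u ≠ 1) {k : ℕ} (hk : k ≠ 0) : u ^ k ≠ 1 :=
  pow_ne_one_aux (norm u) u le_rfl hu k hk

lemma of_eq_mk (i : α) : (of i : FreeGroup α) = mk [(i, true)] := rfl

lemma inv_of_eq (i : α) : (of i : FreeGroup α)⁻¹ = mk [(i, false)] := by
  rw [of_eq_mk, inv_mk]; rfl

theorem core (n : ℕ) (h : Fin n → FreeGroup (Fin n) → ℤ)
    (hfin : ∀ i, {w : FreeGroup (Fin n) | h i w ≠ 0}.Finite)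
    (heq : ∀ w : FreeGroup (Fin n),
      (∑ i : Fin n, (h i w - h i ((FreeGroup.of i)⁻¹ * w))) = 0) :
    ∀ i w, h i w = 0 := by
  by_contra hcon
  push_neg at hcon
  obtain ⟨i₀, w₀, hw₀⟩ := hcon
  set U : Set (FreeGroup (Fin n)) := ⋃ i, {w | h i w ≠ 0} with hU
  have hUfin : U.Finite := Set.finite_iUnion hfin
  have hUne : U.Nonempty := ⟨w₀, Set.mem_iUnion.mpr ⟨i₀, hw₀⟩⟩
  obtain ⟨u, huU, humax'⟩ := Set.exists_max_image U FreeGroup.norm hUfin hUne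
  have humax : ∀ v ∈ U, norm u ≤ norm v → norm u = norm v :=
    fun v hv hle => le_antisymm hle (humax' v hv)
  have hmax : ∀ j v, FreeGroup.norm u < FreeGroup.norm v → h j v = 0 := by
    intro j v hv
    by_contra hne
    have hvU : v ∈ U := Set.mem_iUnion.mpr ⟨j, hne⟩
    rcases le_total (norm u) (norm v) with hle | hle
    · exact absurd (humax v hvU hle) (by omega)
    · omega
  by_cases hA : ∃ j, h j u ≠ 0 ∧ u.toWord.head? ≠ some (j, false)
  · obtain ⟨j, hju, hhead⟩ := hA
    set v : FreeGroup (Fin n) := of j * u with hv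
    have hnc : ∀ y ∈ u.toWord.head?, ¬(((j : Fin n), true).1 = y.1 ∧ ((j : Fin n), true).2 = !y.2) := by
      rintro y hy ⟨h1, h2⟩
      apply hhead
      rw [Option.mem_def] at hy
      rw [hy]
      congr 1
      exact Prod.ext h1.symm (by simpa using h2.symm)
    have hvnorm : norm v = norm u + 1 := by
      rw [hv, of_eq_mk]; exact norm_mk_cons _ _ hnc
    have hvword : v.toWord = (j, true) :: u.toWord := by
      rw [hv, of_eq_mk]; exact toWord_mk_cons _ _ hnc
    have hkey := heq v
    have hterm : ∀ i : Fin n, (h i v - h i ((of i)⁻¹ * v)) = if i = j then -(h j u) else 0 := by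
      intro i
      have hiv : h i v = 0 := hmax i v (by omega)
      by_cases hij : i = j
      · subst hij
        rw [if_pos rfl, hiv, hv, inv_mul_cancel_left, zero_sub]
      · rw [if_neg hij, hiv]
        have hnc2 : ∀ y ∈ v.toWord.head?, ¬(((i : Fin n), false).1 = y.1 ∧ ((i : Fin n), false).2 = !y.2) := by
          rintro y hy ⟨h1, h2⟩
          rw [hvword] at hy
          simp only [List.head?_cons, Option.mem_def, Option.some.injEq] at hy
          apply hij
          rw [← hy] at h1
          exact h1
        have : norm ((of i)⁻¹ * v) = norm v + 1 := by
          rw [inv_of_eq]; exact norm_mk_cons _ _ hnc2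
        rw [hmax i ((of i)⁻¹ * v) (by omega), sub_zero]
    rw [Finset.sum_congr rfl (fun i _ => hterm i), Finset.sum_ite_eq' _ _ _] at hkey
    simp at hkey
    exact hju hkey
  · push_neg at hA
    obtain ⟨j₀, hj₀⟩ : ∃ j, h j u ≠ 0 := by
      obtain ⟨j, hj⟩ := Set.mem_iUnion.mp huU
      exact ⟨j, hj⟩
    have hhead : u.toWord.head? = some (j₀, false) := hA j₀ hj₀
    have hkey := heq u
    have hterm : ∀ i : Fin n, (h i u - h i ((of i)⁻¹ * u)) = h i u := by
      intro i
      have hnc2 : ∀ y ∈ u.toWord.head?, ¬(((i : Fin n), false).1 = y.1 ∧ ((i : Fin n), false).2 = !y.2) := by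
        rintro y hy ⟨h1, h2⟩
        rw [hhead, Option.mem_def, Option.some.injEq] at hy
        rw [← hy] at h2
        simp at h2
      have : norm ((of i)⁻¹ * u) = norm u + 1 := by
        rw [inv_of_eq]; exact norm_mk_cons _ _ hnc2
      rw [hmax i ((of i)⁻¹ * u) (by omega), sub_zero]
    rw [Finset.sum_congr rfl (fun i _ => hterm i)] at hkey
    have hsingle : ∀ i ∈ Finset.univ, i ≠ j₀ → h i u = 0 := by
      intro i _ hij
      by_contra hne
      have h4 := hA i hne
      rw [hhead, Option.some.injEq] at h4
      exact hij (congrArg Prod.fst h4).symm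
    rw [Finset.sum_eq_single_of_mem j₀ (Finset.mem_univ _) hsingle] at hkey
    exact hj₀ hkey

end KernelPsiAux

namespace KernelPsiAux

variable {n : ℕ} {F : Type} {p : F}

lemma smul_val (w : FreeGroup (Fin n)) (x : FinSupp n F p) (s : FreeGroup (Fin n)) :
    (w • x).1 s = x.1 (w⁻¹ * s) := rfl

lemma smul_constP (w : FreeGroup (Fin n)) :
    w • (FinSupp.constP n F p) = FinSupp.constP n F p :=
  Subtype.ext (funext fun _ => rfl)

lemma stab_injective {x : FinSupp n F p} (hx : x ≠ FinSupp.constP n F p) :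
    Function.Injective (fun w : FreeGroup (Fin n) => w • x) := by
  have key : ∀ u : FreeGroup (Fin n), u • x = x → u = 1 := by
    intro u hux
    by_contra hu
    obtain ⟨t, ht⟩ : ∃ t, x.1 t ≠ p := by
      by_contra hcon
      push_neg at hcon
      exact hx (Subtype.ext (funext hcon))
    have hpt : ∀ s, x.1 (u⁻¹ * s) = x.1 s := by
      intro s
      conv_rhs => rw [← hux]
      rfl
    have hiter : ∀ k : ℕ, x.1 ((u⁻¹) ^ k * t) = x.1 t := by
      intro k
      induction k with
      | zero => simp
      | succ k ihk =>
        rw [pow_succ', mul_assoc, hpt, ihk]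
    have cancelp : ∀ a b : ℕ, a < b → (u⁻¹) ^ a = (u⁻¹) ^ b → False := by
      intro a b hab hEq
      have h5 : a + (b - a) = b := by omega
      have h6 : (u⁻¹) ^ a * (u⁻¹) ^ (b - a) = (u⁻¹) ^ a * 1 := by
        rw [← pow_add, h5, mul_one, hEq]
      exact pow_ne_one (by simpa using hu) (by omega : b - a ≠ 0) (mul_left_cancel h6)
    have hinj : Function.Injective (fun k : ℕ => (u⁻¹) ^ k * t) := by
      intro k l hkl
      simp only [mul_left_inj] at hkl
      by_contra hne
      rcases Nat.lt_or_ge k l with hlt | hge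
      · exact cancelp k l hlt hkl
      · exact cancelp l k (by omega) hkl.symm
    have hmem : ∀ k : ℕ, (u⁻¹) ^ k * t ∈ {s : FreeGroup (Fin n) | x.1 s ≠ p} := by
      intro k
      simp only [Set.mem_setOf_eq, hiter]
      exact ht
    exact (Set.infinite_of_injective_forall_mem hinj hmem) x.2
  intro w v hwv
  simp only at hwv
  have : (v⁻¹ * w) • x = x := by
    rw [mul_smul, hwv, ← mul_smul, inv_mul_cancel, one_smul]
  have := key _ this
  have : v * (v⁻¹ * w) = v * 1 := by rw [this]
  rwa [← mul_assoc, mul_inv_cancel, one_mul, mul_one] at this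

end KernelPsiAux

/-- The kernel of `ψ : ⊕ᵢ ℤ[X] → ℤ[X]`, `ψ(f₁,…,fₙ) = Σᵢ (fᵢ - aᵢ·fᵢ)`, where
`X` is the set of finitely supported maps `F_n → F`, consists exactly of the
tuples of integer multiples of the constant map `1_p`. -/
theorem kernel_of_psi (n : ℕ) (F : Type) [Finite F] (p : F)
    (g : Fin n → (FinSupp n F p →₀ ℤ)) :
    (∑ i : Fin n,
        (g i - Finsupp.mapDomain (fun f : FinSupp n F p => FreeGroup.of i • f) (g i))) = 0
      ↔ ∀ i : Fin n, ∃ c : ℤ, g i = c • Finsupp.single (FinSupp.constP n F p) (1 : ℤ) := by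
  classical
  constructor
  · intro H
    -- pointwise form of the hypothesis
    have Hpt : ∀ y : FinSupp n F p,
        (∑ i : Fin n, (g i y - g i ((FreeGroup.of i)⁻¹ • y))) = 0 := by
      intro y
      have h1 := congrArg (fun f : FinSupp n F p →₀ ℤ => f y) H
      simp only [Finsupp.coe_zero, Pi.zero_apply] at h1
      rw [Finsupp.finset_sum_apply] at h1
      rw [← h1]
      apply Finset.sum_congr rfl
      intro i _
      rw [Finsupp.sub_apply]
      have hinj : Function.Injective (fun f : FinSupp n F p => FreeGroup.of i • f) :=
        MulAction.injective _
      have hy : (FreeGroup.of i) • ((FreeGroup.of i)⁻¹ • y) = y := by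
        rw [← mul_smul, mul_inv_cancel, one_smul]
      have hmd : (Finsupp.mapDomain (fun f : FinSupp n F p => FreeGroup.of i • f) (g i)) y
          = g i ((FreeGroup.of i)⁻¹ • y) := by
        conv_lhs => rw [← hy]
        exact Finsupp.mapDomain_apply hinj _ _
      rw [hmd]
    intro i
    refine ⟨g i (FinSupp.constP n F p), ?_⟩
    ext y
    by_cases hy : y = FinSupp.constP n F p
    · subst hy
      simp
    · have hzero : g i y = 0 := by
        have hinj := KernelPsiAux.stab_injective (n := n) (F := F) (p := p) hy
        have hcore := KernelPsiAux.core n (fun j w => g j (w • y))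
          (fun j => by
            apply Set.Finite.subset (((g j).support.finite_toSet).preimage
              (Set.injOn_of_injective hinj))
            intro w hw
            simp only [Set.mem_preimage, Finset.mem_coe, Finsupp.mem_support_iff]
            exact hw)
          (fun w => by
            have := Hpt (w • y)
            rw [← this]
            apply Finset.sum_congr rfl
            intro j _
            congr 1
            rw [← mul_smul])
        have := hcore i 1
        simpa using this
      rw [hzero]
      rw [Finsupp.smul_apply, Finsupp.single_eq_of_ne' (Ne.symm hy)]
      simp
  · intro H
    apply Finset.sum_eq_zero
    intro i _
    obtain ⟨c, hc⟩ := H i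
    rw [hc, sub_eq_zero]
    rw [Finsupp.mapDomain_smul, Finsupp.mapDomain_single, KernelPsiAux.smul_constP]
end

section
/- Let F_n = ⟨a_1,...,a_n⟩ and (F,p) a pointed finite set. For the left translation action of F_n on the set X of finitely supported maps F_n → F, the set R of all maps whose support has convex hull (in the Cayley graph of F_n) an admissible tree — i.e., a finite subtree whose barycentre is either the vertex e or an edge [e, a_i] for some i — is a complete set of representatives for the F_n-orbits in X: every element of X lies in the orbit of exactly one element of R. -/
/-- The Cayley graph of the free group `F_n` with respect to the free generators. -/
def Cayley (n : ℕ) : SimpleGraph (FreeGroup (Fin n)) where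
  Adj x y := x ≠ y ∧ ∃ i : Fin n, y = x * FreeGroup.of i ∨ x = y * FreeGroup.of i
  symm := by
    constructor
    rintro x y ⟨h, i, hi⟩
    exact ⟨h.symm, i, hi.symm⟩
  loopless := by constructor; rintro x ⟨h, -⟩; exact h rfl

/-- The convex hull of a set of vertices in the Cayley tree: the set of vertices
lying on a geodesic between two points of the set. -/
def cayleyHull (n : ℕ) (S : Set (FreeGroup (Fin n))) : Set (FreeGroup (Fin n)) :=
  {v | ∃ a ∈ S, ∃ b ∈ S,
    (Cayley n).dist a v + (Cayley n).dist v b = (Cayley n).dist a b}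

/-- Eccentricity of a vertex relative to a set of vertices. -/
noncomputable def cayleyEcc (n : ℕ) (S : Set (FreeGroup (Fin n)))
    (v : FreeGroup (Fin n)) : ℕ :=
  sSup ((fun u => (Cayley n).dist v u) '' S)

/-- The barycentre of a finite subtree `S` of the Cayley tree (the vertex or the
pair of adjacent vertices left after repeatedly deleting terminal vertices),
realised as the set of vertices of `S` of minimal eccentricity. -/
def cayleyBarycentre (n : ℕ) (S : Set (FreeGroup (Fin n))) : Set (FreeGroup (Fin n)) :=
  {v ∈ S | ∀ u ∈ S, cayleyEcc n S v ≤ cayleyEcc n S u}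

set_option linter.unusedVariables false

namespace CayleyAux
open FreeGroup List

set_option linter.unusedSectionVars false

variable {α : Type} [DecidableEq α]

/-- No-cancellation relation between adjacent letters. -/
def NC (a b : α × Bool) : Prop := ¬(b.1 = a.1 ∧ b.2 = !a.2)

/-- A word is reduced. -/
def IsRed (w : List (α × Bool)) : Prop := List.Chain' NC w

lemma IsRed.reduce_eq {w : List (α × Bool)} (h : IsRed w) : FreeGroup.reduce w = w := by
  induction w with
  | nil => rfl
  | cons x t ih =>
    rw [FreeGroup.reduce.cons, ih h.tail]
    cases t with
    | nil => rfl
    | cons hd tl =>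
      have hR : NC x hd := (List.isChain_cons_cons.1 h).1
      show (if x.1 = hd.1 ∧ x.2 = !hd.2 then tl else x :: hd :: tl) = x :: hd :: tl
      rw [if_neg]
      rintro ⟨h1, h2⟩
      exact hR ⟨h1.symm, by simp [h2]⟩

lemma isRed_reduce (w : List (α × Bool)) : IsRed (FreeGroup.reduce w) := by
  induction w with
  | nil => exact List.isChain_nil
  | cons x t ih =>
    rw [FreeGroup.reduce.cons]
    cases hr : FreeGroup.reduce t with
    | nil => exact List.isChain_singleton _
    | cons hd tl =>
      rw [hr] at ih
      show IsRed (if x.1 = hd.1 ∧ x.2 = !hd.2 then tl else x :: hd :: tl)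
      by_cases hc : x.1 = hd.1 ∧ x.2 = !hd.2
      · rw [if_pos hc]; exact ih.tail
      · rw [if_neg hc]
        refine List.isChain_cons_cons.2 ⟨?_, ih⟩
        rintro ⟨h1, h2⟩
        exact hc ⟨h1.symm, by simp [h2]⟩

lemma isRed_toWord (x : FreeGroup α) : IsRed x.toWord := by
  rw [← FreeGroup.reduce_toWord]; exact isRed_reduce _

lemma norm_mk {w : List (α × Bool)} (h : IsRed w) : FreeGroup.norm (mk w) = w.length := by
  rw [FreeGroup.norm, FreeGroup.toWord_mk, h.reduce_eq]

lemma IsRed.invRev {w : List (α × Bool)} (h : IsRed w) : IsRed (FreeGroup.invRev w) := by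
  have := @FreeGroup.reduce_invRev α _ w
  rw [h.reduce_eq] at this
  rw [← this]; exact isRed_reduce _

lemma IsRed.take {w : List (α × Bool)} (h : IsRed w) (k : ℕ) : IsRed (w.take k) :=
  List.IsChain.take h k

lemma IsRed.drop {w : List (α × Bool)} (h : IsRed w) (k : ℕ) : IsRed (w.drop k) :=
  List.IsChain.drop h k

lemma IsRed.tail {w : List (α × Bool)} (h : IsRed w) : IsRed w.tail :=
  List.IsChain.tail h


/-- Length of longest common prefix. -/
def cpl : List (α × Bool) → List (α × Bool) → ℕ
  | a :: u, b :: v => if a = b then cpl u v + 1 else 0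
  | _, _ => 0

@[simp] lemma cpl_nil_left (v : List (α × Bool)) : cpl [] v = 0 := by cases v <;> rfl

@[simp] lemma cpl_nil_right (u : List (α × Bool)) : cpl u [] = 0 := by cases u <;> rfl

lemma cpl_cons (a b : α × Bool) (u v : List (α × Bool)) :
    cpl (a :: u) (b :: v) = if a = b then cpl u v + 1 else 0 := rfl

lemma cpl_le_left : ∀ (u v : List (α × Bool)), cpl u v ≤ u.length
  | [], v => by simp
  | a :: u, [] => by simp
  | a :: u, b :: v => by
    rw [cpl_cons]
    split
    · simpa using cpl_le_left u v
    · simp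

lemma cpl_comm : ∀ (u v : List (α × Bool)), cpl u v = cpl v u
  | [], v => by simp
  | a :: u, [] => by simp
  | a :: u, b :: v => by
    rw [cpl_cons, cpl_cons, cpl_comm u v]
    by_cases h : a = b
    · rw [if_pos h, if_pos h.symm]
    · rw [if_neg h, if_neg (Ne.symm h)]

lemma cpl_le_right (u v : List (α × Bool)) : cpl u v ≤ v.length := by
  rw [cpl_comm]; exact cpl_le_left v u

lemma cpl_eq_length_iff : ∀ (u v : List (α × Bool)), cpl u v = u.length ↔ u <+: v
  | [], v => by simp
  | a :: u, [] => by simp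
  | a :: u, b :: v => by
    rw [cpl_cons]
    by_cases h : a = b
    · subst h
      rw [if_pos rfl]
      simp only [List.length_cons, Nat.add_right_cancel_iff, cpl_eq_length_iff u v,
        List.cons_prefix_cons, true_and]
    · rw [if_neg h]
      simp only [List.cons_prefix_cons]
      constructor
      · intro h0
        exact absurd h0.symm (by simp)
      · rintro ⟨rfl, -⟩; exact absurd rfl h

lemma cpl_ultra : ∀ (u w v : List (α × Bool)), min (cpl u w) (cpl w v) ≤ cpl u v
  | a :: u, b :: w, c :: v => by
    rw [cpl_cons, cpl_cons, cpl_cons]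
    by_cases h1 : a = b
    · by_cases h2 : b = c
      · rw [if_pos h1, if_pos h2, if_pos (h1.trans h2)]
        have := cpl_ultra u w v
        omega
      · rw [if_pos h1, if_neg h2]; simp
    · rw [if_neg h1]; simp
  | [], w, v => by simp
  | u, [], v => by simp
  | u, w, [] => by simp

/-- The key length formula for products in free groups. -/
lemma norm_inv_mul_mk : ∀ (u v : List (α × Bool)), IsRed u → IsRed v →
    FreeGroup.norm ((mk u)⁻¹ * mk v) = (u.length - cpl u v) + (v.length - cpl u v)
  | [], v, _, hv => by
    simp only [cpl_nil_left, Nat.sub_zero, List.length_nil]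
    rw [← FreeGroup.one_eq_mk, inv_one, one_mul, norm_mk hv]; omega
  | a :: u, [], hu, _ => by
    simp only [cpl_nil_right, Nat.sub_zero, List.length_nil]
    rw [← FreeGroup.one_eq_mk, mul_one, FreeGroup.norm_inv_eq, norm_mk hu]; omega
  | a :: u, b :: v, hu, hv => by
    by_cases hab : a = b
    · subst hab
      have key : (mk (a :: u))⁻¹ * mk (a :: v) = (mk u)⁻¹ * mk v := by
        have h1 : mk (a :: u) = mk [a] * mk u := by rw [FreeGroup.mul_mk]; rfl
        have h2 : mk (a :: v) = mk [a] * mk v := by rw [FreeGroup.mul_mk]; rfl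
        rw [h1, h2, mul_inv_rev, mul_assoc, ← mul_assoc (mk [a])⁻¹, inv_mul_cancel, one_mul]
      rw [key, norm_inv_mul_mk u v hu.tail hv.tail, cpl_cons, if_pos rfl]
      have h3 := cpl_le_left u v
      have h4 := cpl_le_right u v
      simp only [List.length_cons]
      omega
    · have hj : IsRed (FreeGroup.invRev (a :: u) ++ (b :: v)) := by
        refine List.IsChain.append hu.invRev hv ?_
        intro x hx y hy
        have hx' : x = (a.1, !a.2) := by
          have : FreeGroup.invRev (a :: u)
              = (List.map (fun g : α × Bool => (g.1, !g.2)) u).reverse ++ [(a.1, !a.2)] := by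
            simp [FreeGroup.invRev]
          rw [this, List.getLast?_append] at hx
          · have : (a.1, !a.2) = x := by simpa using hx
            exact this.symm
        have hy' : y = b := by
          have : b = y := by simpa using hy
          exact this.symm
        subst hx'; subst hy'
        rintro ⟨e1, e2⟩
        apply hab
        apply Prod.ext
        · exact e1.symm
        · simpa using e2.symm
      have key : (mk (a :: u))⁻¹ * mk (b :: v) = mk (FreeGroup.invRev (a :: u) ++ (b :: v)) := by
        rw [FreeGroup.inv_mk, FreeGroup.mul_mk]
      rw [key, norm_mk hj, cpl_cons, if_neg hab]
      simp [FreeGroup.invRev]; omega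


/-! ### The word metric on the free group -/

/-- The word metric. -/
def d (x y : FreeGroup α) : ℕ := FreeGroup.norm (x⁻¹ * y)

lemma d_formula (x y : FreeGroup α) :
    d x y = (FreeGroup.norm x - cpl x.toWord y.toWord)
      + (FreeGroup.norm y - cpl x.toWord y.toWord) := by
  have := norm_inv_mul_mk x.toWord y.toWord (isRed_toWord x) (isRed_toWord y)
  rw [FreeGroup.mk_toWord, FreeGroup.mk_toWord] at this
  exact this

@[simp] lemma d_self (x : FreeGroup α) : d x x = 0 := by
  simp [d]

lemma d_comm (x y : FreeGroup α) : d x y = d y x := by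
  have : (x⁻¹ * y)⁻¹ = y⁻¹ * x := by group
  rw [d, ← FreeGroup.norm_inv_eq, this, d]

lemma d_left_inv (g x y : FreeGroup α) : d (g * x) (g * y) = d x y := by
  have : (g * x)⁻¹ * (g * y) = x⁻¹ * y := by group
  rw [d, this, d]

lemma d_eq_zero_iff {x y : FreeGroup α} : d x y = 0 ↔ x = y := by
  rw [d, FreeGroup.norm_eq_zero, inv_mul_eq_one]

lemma d_triangle (x y z : FreeGroup α) : d x z ≤ d x y + d y z := by
  have : x⁻¹ * z = (x⁻¹ * y) * (y⁻¹ * z) := by group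
  rw [d, this]
  exact FreeGroup.norm_mul_le _ _

lemma d_one (x : FreeGroup α) : d 1 x = FreeGroup.norm x := by simp [d]

/-- Betweenness in the tree. -/
def Btw (a m b : FreeGroup α) : Prop := d a m + d m b = d a b

lemma btw_left_inv {g a m b : FreeGroup α} : Btw (g * a) (g * m) (g * b) ↔ Btw a m b := by
  unfold Btw; rw [d_left_inv, d_left_inv, d_left_inv]

lemma btw_self_left (a b : FreeGroup α) : Btw a a b := by simp [Btw]

lemma btw_self_right (a b : FreeGroup α) : Btw a b b := by simp [Btw]

lemma btw_one_iff {m b : FreeGroup α} : Btw 1 m b ↔ m.toWord <+: b.toWord := by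
  have hf := d_formula m b
  have h1 := cpl_le_left m.toWord b.toWord
  have h2 := cpl_le_right m.toWord b.toWord
  have hm : FreeGroup.norm m = m.toWord.length := rfl
  have hb : FreeGroup.norm b = b.toWord.length := rfl
  rw [← cpl_eq_length_iff]
  unfold Btw
  rw [d_one, d_one, hf]
  omega

/-- The fundamental tree property: a point between `a` and `b` is between `1` and `a`
or between `1` and `b`. -/
lemma btw_c5 {a m b : FreeGroup α} (h : Btw a m b) : Btw 1 m a ∨ Btw 1 m b := by
  have hma := d_formula m a
  have hmb := d_formula m b
  have hab := d_formula a b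
  have h1 := cpl_le_left m.toWord a.toWord
  have h2 := cpl_le_right m.toWord a.toWord
  have h3 := cpl_le_left m.toWord b.toWord
  have h4 := cpl_le_right m.toWord b.toWord
  have h5 := cpl_le_left a.toWord b.toWord
  have h6 := cpl_le_right a.toWord b.toWord
  have hu : min (cpl a.toWord m.toWord) (cpl m.toWord b.toWord) ≤ cpl a.toWord b.toWord :=
    cpl_ultra _ _ _
  rw [cpl_comm a.toWord m.toWord] at hu
  have hca : Btw 1 m a ↔ cpl m.toWord a.toWord = m.toWord.length := by
    rw [btw_one_iff, ← cpl_eq_length_iff]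
  have hcb : Btw 1 m b ↔ cpl m.toWord b.toWord = m.toWord.length := by
    rw [btw_one_iff, ← cpl_eq_length_iff]
  rw [hca, hcb]
  unfold Btw at h
  rw [d_comm a m, hma, hmb, hab] at h
  have hm : FreeGroup.norm m = m.toWord.length := rfl
  have ha : FreeGroup.norm a = a.toWord.length := rfl
  have hb : FreeGroup.norm b = b.toWord.length := rfl
  omega

/-- General version of C5 by translation. -/
lemma btw_c5' {a m b s : FreeGroup α} (h : Btw a m b) : Btw s m a ∨ Btw s m b := by
  have h' : Btw (s⁻¹ * a) (s⁻¹ * m) (s⁻¹ * b) := btw_left_inv.2 (by simpa using h)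
  rcases btw_c5 h' with hc | hc
  · left
    have := (btw_left_inv (g := s)).2 (by simpa using hc)
    simpa using this
  · right
    have := (btw_left_inv (g := s)).2 (by simpa using hc)
    simpa using this

lemma d_le_of_btw {s m a : FreeGroup α} (h : Btw s m a) : d s m ≤ d s a := by
  unfold Btw at h; omega

/-- C1 : convexity. -/
lemma d_le_max_of_btw {a m b v : FreeGroup α} (h : Btw a m b) :
    d v m ≤ max (d v a) (d v b) := by
  rcases btw_c5' (s := v) h with hc | hc
  · exact le_trans (d_le_of_btw hc) (le_max_left _ _)
  · exact le_trans (d_le_of_btw hc) (le_max_right _ _)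


/-! ### Segments -/

/-- The point at distance `k` from `a` on the geodesic from `a` to `b`. -/
def seg (a b : FreeGroup α) (k : ℕ) : FreeGroup α :=
  a * FreeGroup.mk ((a⁻¹ * b).toWord.take k)

lemma isRed_take_toWord (x : FreeGroup α) (k : ℕ) : IsRed (x.toWord.take k) :=
  (isRed_toWord x).take k

lemma d_seg_left {a b : FreeGroup α} {k : ℕ} (hk : k ≤ d a b) : d a (seg a b k) = k := by
  have h : d a (seg a b k) = FreeGroup.norm (FreeGroup.mk ((a⁻¹ * b).toWord.take k)) := by
    rw [d, seg]; congr 1; group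
  rw [h, norm_mk (isRed_take_toWord _ _), List.length_take]
  have : d a b = (a⁻¹ * b).toWord.length := rfl
  omega

lemma d_mk_take (C : List (α × Bool)) (h : IsRed C) (k : ℕ) :
    d (FreeGroup.mk (C.take k)) (FreeGroup.mk C) = C.length - k := by
  have h1 : FreeGroup.mk C = FreeGroup.mk (C.take k) * FreeGroup.mk (C.drop k) := by
    rw [FreeGroup.mul_mk, List.take_append_drop]
  rw [d, h1, inv_mul_cancel_left, norm_mk (h.drop k), List.length_drop]

lemma d_seg_right {a b : FreeGroup α} {k : ℕ} (hk : k ≤ d a b) :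
    d (seg a b k) b = d a b - k := by
  have e : d (seg a b k) b
      = d (a * FreeGroup.mk ((a⁻¹ * b).toWord.take k)) (a * (a⁻¹ * b)) := by
    rw [seg]; congr 1; group
  rw [e, d_left_inv]
  have := d_mk_take (a⁻¹ * b).toWord (isRed_toWord _) k
  rw [FreeGroup.mk_toWord] at this
  rw [this]; rfl

lemma btw_seg {a b : FreeGroup α} {k : ℕ} (hk : k ≤ d a b) : Btw a (seg a b k) b := by
  unfold Btw
  rw [d_seg_left hk, d_seg_right hk]
  omega

/-- Uniqueness of the point at distance `k` on a geodesic. -/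
lemma eq_seg_of_btw {a b v : FreeGroup α} (h : Btw a v b) : v = seg a b (d a v) := by
  have h' : Btw 1 (a⁻¹ * v) (a⁻¹ * b) := by
    have := (btw_left_inv (g := a⁻¹)).2 h
    simpa using this
  have hp : (a⁻¹ * v).toWord <+: (a⁻¹ * b).toWord := btw_one_iff.1 h'
  have hlen : (a⁻¹ * v).toWord.length = d a v := rfl
  have : (a⁻¹ * v).toWord = (a⁻¹ * b).toWord.take (d a v) := by
    rw [← hlen]; exact List.prefix_iff_eq_take.1 hp
  have hv : a⁻¹ * v = FreeGroup.mk ((a⁻¹ * b).toWord.take (d a v)) := by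
    rw [← this, FreeGroup.mk_toWord]
  rw [seg, ← hv]
  group

/-- Distance between two points on a common geodesic from `a`. -/
lemma d_of_btw_btw {a c x y : FreeGroup α} (hx : Btw a x c) (hy : Btw a y c)
    (hxy : d a x ≤ d a y) : d x y = d a y - d a x := by
  have hx' : Btw 1 (a⁻¹ * x) (a⁻¹ * c) := by
    have := (btw_left_inv (g := a⁻¹)).2 hx; simpa using this
  have hy' : Btw 1 (a⁻¹ * y) (a⁻¹ * c) := by
    have := (btw_left_inv (g := a⁻¹)).2 hy; simpa using this
  have hpx := List.prefix_iff_eq_take.1 (btw_one_iff.1 hx')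
  have hpy := List.prefix_iff_eq_take.1 (btw_one_iff.1 hy')
  have hlx : (a⁻¹ * x).toWord.length = d a x := rfl
  have hly : (a⁻¹ * y).toWord.length = d a y := rfl
  have hpre : (a⁻¹ * x).toWord <+: (a⁻¹ * y).toWord := by
    rw [hpx, hpy, hlx, hly]
    have : (a⁻¹ * c).toWord.take (d a x)
        = ((a⁻¹ * c).toWord.take (d a y)).take (d a x) := by
      rw [List.take_take, min_eq_left hxy]
    rw [this]
    exact List.take_prefix _ _
  have hc : cpl (a⁻¹ * x).toWord (a⁻¹ * y).toWord = (a⁻¹ * x).toWord.length :=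
    (cpl_eq_length_iff _ _).2 hpre
  have hd : d x y = d (a⁻¹ * x) (a⁻¹ * y) := (d_left_inv a⁻¹ x y).symm
  rw [hd, d_formula]
  have h1 : FreeGroup.norm (a⁻¹ * x) = d a x := rfl
  have h2 : FreeGroup.norm (a⁻¹ * y) = d a y := rfl
  rw [hc] at *
  omega

/-! ### Parity -/

/-- Parity homomorphism. -/
def par : FreeGroup α →* Multiplicative (ZMod 2) :=
  FreeGroup.lift (fun _ => Multiplicative.ofAdd (1 : ZMod 2))

lemma par_mk (w : List (α × Bool)) :
    Multiplicative.toAdd (par (FreeGroup.mk w)) = (w.length : ZMod 2) := by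
  induction w with
  | nil => rw [← FreeGroup.one_eq_mk]; simp
  | cons c t ih =>
    have : FreeGroup.mk (c :: t) = FreeGroup.mk [c] * FreeGroup.mk t := by
      rw [FreeGroup.mul_mk]; rfl
    rw [this, MonoidHom.map_mul]
    have hc : Multiplicative.toAdd (par (FreeGroup.mk [c])) = (1 : ZMod 2) := by
      rcases c with ⟨i, b⟩
      cases b
      · have : FreeGroup.mk [(i, false)] = (FreeGroup.of i)⁻¹ := by
          show FreeGroup.mk [(i, false)] = (FreeGroup.mk [(i, true)])⁻¹
          rw [FreeGroup.inv_mk]; rfl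
        rw [this, MonoidHom.map_inv]
        show -Multiplicative.toAdd (par (FreeGroup.of i)) = 1
        rw [show par (FreeGroup.of i) = Multiplicative.ofAdd (1 : ZMod 2) from
          FreeGroup.lift_apply_of]
        decide
      · rw [show (FreeGroup.mk [(i, true)]) = FreeGroup.of i from rfl,
          show par (FreeGroup.of i) = Multiplicative.ofAdd (1 : ZMod 2) from
          FreeGroup.lift_apply_of]
        rfl
    show Multiplicative.toAdd (par (FreeGroup.mk [c])) + Multiplicative.toAdd
      (par (FreeGroup.mk t)) = _
    rw [hc, ih]
    simp [Nat.cast_add]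
    ring
  
lemma par_norm (x : FreeGroup α) :
    Multiplicative.toAdd (par x) = (FreeGroup.norm x : ZMod 2) := by
  conv_lhs => rw [← FreeGroup.mk_toWord (x := x)]
  rw [par_mk]; rfl

lemma d_parity (v a b : FreeGroup α) : (d v a + d v b) % 2 = d a b % 2 := by
  have key : ((d v a + d v b : ℕ) : ZMod 2) = ((d a b : ℕ) : ZMod 2) := by
    have h1 : (v⁻¹ * a)⁻¹ * (v⁻¹ * b) = a⁻¹ * b := by group
    have h2 : Multiplicative.toAdd (par ((v⁻¹ * a)⁻¹ * (v⁻¹ * b)))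
        = Multiplicative.toAdd (par (a⁻¹ * b)) := by rw [h1]
    rw [MonoidHom.map_mul, MonoidHom.map_inv] at h2
    have h3 : -Multiplicative.toAdd (par (v⁻¹ * a)) + Multiplicative.toAdd (par (v⁻¹ * b))
        = Multiplicative.toAdd (par (a⁻¹ * b)) := h2
    rw [par_norm, par_norm, par_norm] at h3
    have hneg : (-(FreeGroup.norm (v⁻¹ * a) : ZMod 2)) = (FreeGroup.norm (v⁻¹ * a) : ZMod 2) := by
      generalize (FreeGroup.norm (v⁻¹ * a) : ZMod 2) = z
      revert z; decide
    rw [hneg] at h3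
    push_cast
    exact h3
  rwa [ZMod.natCast_eq_natCast_iff, Nat.ModEq] at key


/-! ### The Cayley graph distance equals the word metric -/

section Graph

variable {n : ℕ}

lemma adj_of_mul_single (x : FreeGroup (Fin n)) (c : Fin n × Bool) :
    (Cayley n).Adj x (x * FreeGroup.mk [c]) := by
  constructor
  · intro h
    have : FreeGroup.mk [c] = 1 := by
      have := mul_left_cancel (a := x) (b := FreeGroup.mk [c]) (c := 1) (by rw [mul_one, ← h])
      exact this
    have h2 : FreeGroup.norm (FreeGroup.mk [c]) = 1 := by
      rw [norm_mk (List.isChain_singleton _)]; rfl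
    rw [this] at h2
    simp at h2
  · rcases c with ⟨i, b⟩
    refine ⟨i, ?_⟩
    cases b
    · right
      have : FreeGroup.mk [(i, false)] = (FreeGroup.of i)⁻¹ := by
        show FreeGroup.mk [(i, false)] = (FreeGroup.mk [(i, true)])⁻¹
        rw [FreeGroup.inv_mk]; rfl
      rw [this, mul_assoc, inv_mul_cancel, mul_one]
    · left; rfl

lemma walk_exists : ∀ (w : List (Fin n × Bool)) (x : FreeGroup (Fin n)),
    ∃ p : (Cayley n).Walk x (x * FreeGroup.mk w), p.length = w.length
  | [], x => by
    refine ⟨SimpleGraph.Walk.nil.copy rfl ?_, by rw [SimpleGraph.Walk.length_copy]; rfl⟩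
    rw [← FreeGroup.one_eq_mk, mul_one]
  | c :: t, x => by
    obtain ⟨p, hp⟩ := walk_exists t (x * FreeGroup.mk [c])
    have he : x * FreeGroup.mk [c] * FreeGroup.mk t = x * FreeGroup.mk (c :: t) := by
      rw [mul_assoc, FreeGroup.mul_mk]; rfl
    refine ⟨SimpleGraph.Walk.cons (adj_of_mul_single x c) (p.copy rfl he), by simp [hp]⟩

lemma d_adj {x y : FreeGroup (Fin n)} (h : (Cayley n).Adj x y) : d x y = 1 := by
  rcases h with ⟨hne, i, hi | hi⟩
  · rw [d, hi]
    have : x⁻¹ * (x * FreeGroup.of i) = FreeGroup.of i := by group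
    rw [this, FreeGroup.norm_of]
  · rw [d, hi]
    have : (y * FreeGroup.of i)⁻¹ * y = (FreeGroup.of i)⁻¹ := by group
    rw [this, FreeGroup.norm_inv_eq, FreeGroup.norm_of]

lemma d_le_walk {x y : FreeGroup (Fin n)} (p : (Cayley n).Walk x y) : d x y ≤ p.length := by
  induction p with
  | nil => simp
  | cons h p ih =>
    calc d _ _ ≤ d _ _ + d _ _ := d_triangle _ _ _
    _ ≤ 1 + p.length := by
        rw [d_adj h]
        exact Nat.add_le_add_left ih 1
    _ = _ := by rw [SimpleGraph.Walk.length_cons]; omega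

lemma reachable (x y : FreeGroup (Fin n)) : (Cayley n).Reachable x y := by
  obtain ⟨p, -⟩ := walk_exists (x⁻¹ * y).toWord x
  rw [FreeGroup.mk_toWord, mul_inv_cancel_left] at p
  exact ⟨p⟩

lemma dist_eq_d (x y : FreeGroup (Fin n)) : (Cayley n).dist x y = d x y := by
  apply _root_.le_antisymm
  · obtain ⟨p, hp⟩ := walk_exists (x⁻¹ * y).toWord x
    have he : x * FreeGroup.mk (x⁻¹ * y).toWord = y := by
      rw [FreeGroup.mk_toWord, mul_inv_cancel_left]
    calc (Cayley n).dist x y ≤ (p.copy rfl he).length := SimpleGraph.dist_le _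
    _ = (x⁻¹ * y).toWord.length := by rw [SimpleGraph.Walk.length_copy]; exact hp
    _ = d x y := rfl
  · obtain ⟨p, hp⟩ := (reachable x y).exists_walk_length_eq_dist
    rw [← hp]
    exact d_le_walk p

lemma dist_left_inv (g x y : FreeGroup (Fin n)) :
    (Cayley n).dist (g * x) (g * y) = (Cayley n).dist x y := by
  rw [dist_eq_d, dist_eq_d, d_left_inv]

end Graph


/-! ### The centre of the hull -/

section Centre

variable {n : ℕ}

/-- The hull in terms of the word metric. -/
def Hull (S : Set (FreeGroup (Fin n))) : Set (FreeGroup (Fin n)) :=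
  {v | ∃ a ∈ S, ∃ b ∈ S, Btw a v b}

lemma cayleyHull_eq (S : Set (FreeGroup (Fin n))) : cayleyHull n S = Hull S := by
  unfold cayleyHull Hull Btw
  ext v
  simp only [Set.mem_setOf_eq, dist_eq_d]

lemma cayleyEcc_eq (H : Set (FreeGroup (Fin n))) (v : FreeGroup (Fin n)) :
    cayleyEcc n H v = sSup ((fun u => d v u) '' H) := by
  unfold cayleyEcc
  congr 1
  apply Set.image_congr
  intro u _
  rw [dist_eq_d]

lemma subset_hull (S : Set (FreeGroup (Fin n))) : S ⊆ Hull S := by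
  intro v hv
  exact ⟨v, hv, v, hv, by simp [Btw]⟩

/-- Main structure theorem: the barycentre of the hull of a finite nonempty set is a
vertex or an edge. -/
theorem centre_structure {S : Set (FreeGroup (Fin n))} (hfin : S.Finite) (hne : S.Nonempty) :
    (∃ c, cayleyBarycentre n (cayleyHull n S) = {c}) ∨
    (∃ c i b, cayleyBarycentre n (cayleyHull n S) = {c, c * FreeGroup.mk [(i, b)]}) := by
  classical
  -- a diametral pair
  obtain ⟨⟨a, b⟩, habS, hmax⟩ := Set.exists_max_image (S ×ˢ S) (fun q => d q.1 q.2)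
    (hfin.prod hfin) (hne.prod hne)
  obtain ⟨haS, hbS⟩ := Set.mem_prod.1 habS
  set D := d a b with hD
  have hdiam : ∀ x ∈ S, ∀ y ∈ S, d x y ≤ D := fun x hx y hy => hmax (x, y) ⟨hx, hy⟩
  set R := D - D / 2 with hR
  set H := Hull S with hH
  have haH : a ∈ H := subset_hull S haS
  have hbH : b ∈ H := subset_hull S hbS
  -- bound on distances to hull points
  have hull_bound : ∀ v, ∀ u ∈ H, ∀ K, (∀ s ∈ S, d v s ≤ K) → d v u ≤ K := by
    rintro v u ⟨x, hx, y, hy, hxy⟩ K hK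
    calc d v u ≤ max (d v x) (d v y) := d_le_max_of_btw hxy
    _ ≤ K := max_le (hK x hx) (hK y hy)
  -- eccentricity over the hull
  have bdd : ∀ v, BddAbove ((fun u => d v u) '' H) := by
    intro v
    obtain ⟨s0, hs0, hsmax⟩ := Set.exists_max_image S (fun s => d v s) hfin hne
    refine ⟨d v s0, ?_⟩
    rintro - ⟨u, hu, rfl⟩
    exact hull_bound v u hu _ fun s hs => hsmax s hs
  have le_ecc : ∀ v, ∀ u ∈ H, d v u ≤ cayleyEcc n H v := by
    intro v u hu
    rw [cayleyEcc_eq]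
    exact le_csSup (bdd v) ⟨u, hu, rfl⟩
  have ecc_le : ∀ v K, (∀ u ∈ H, d v u ≤ K) → cayleyEcc n H v ≤ K := by
    intro v K hK
    rw [cayleyEcc_eq]
    exact csSup_le ⟨d v a, a, haH, rfl⟩ (by rintro - ⟨u, hu, rfl⟩; exact hK u hu)
  -- the two midpoints
  have hk1 : D / 2 ≤ D := Nat.div_le_self _ _
  have hk2 : R ≤ D := Nat.sub_le _ _
  set m1 := seg a b (D / 2) with hm1
  set m2 := seg a b R with hm2
  have hm1H : m1 ∈ H := ⟨a, haS, b, hbS, btw_seg hk1⟩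
  have hm2H : m2 ∈ H := ⟨a, haS, b, hbS, btw_seg hk2⟩
  have hd1a : d a m1 = D / 2 := d_seg_left hk1
  have hd1b : d m1 b = D - D / 2 := d_seg_right hk1
  have hd2a : d a m2 = R := d_seg_left hk2
  have hd2b : d m2 b = D - R := d_seg_right hk2
  -- both midpoints have eccentricity at most R
  have ecc_seg : ∀ k, k ≤ D → ∀ s ∈ S, d (seg a b k) s ≤ max (D - k) k := by
    intro k hk s hs
    rcases btw_c5' (s := s) (btw_seg hk) with hc | hc
    · rw [d_comm]
      have h1 : d s (seg a b k) + d (seg a b k) a = d s a := hc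
      have h2 : d (seg a b k) a = k := by rw [d_comm]; exact d_seg_left hk
      have h3 : d s a ≤ D := hdiam s hs a haS
      omega
    · rw [d_comm]
      have h1 : d s (seg a b k) + d (seg a b k) b = d s b := hc
      have h2 : d (seg a b k) b = D - k := d_seg_right hk
      have h3 : d s b ≤ D := hdiam s hs b hbS
      omega
  have ecc_m1 : cayleyEcc n H m1 ≤ R := by
    refine ecc_le m1 R fun u hu => hull_bound m1 u hu R fun s hs => ?_
    have := ecc_seg (D / 2) hk1 s hs
    rw [← hm1] at this
    omega
  have ecc_m2 : cayleyEcc n H m2 ≤ R := by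
    refine ecc_le m2 R fun u hu => hull_bound m2 u hu R fun s hs => ?_
    have := ecc_seg R hk2 s hs
    rw [← hm2] at this
    omega
  -- every point has eccentricity at least R
  have ecc_ge : ∀ v, R ≤ cayleyEcc n H v := by
    intro v
    have h1 := le_ecc v a haH
    have h2 := le_ecc v b hbH
    have h3 : D ≤ d v a + d v b := by
      rw [d_comm v a]
      exact d_triangle a v b
    omega
  -- characterisation of the minimisers
  have char : ∀ v ∈ H, cayleyEcc n H v ≤ R → v = m1 ∨ v = m2 := by
    intro v hv hecc
    have h1 : d v a ≤ R := le_trans (le_ecc v a haH) hecc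
    have h2 : d v b ≤ R := le_trans (le_ecc v b hbH) hecc
    have h3 : D ≤ d v a + d v b := by
      rw [d_comm v a]; exact d_triangle a v b
    have h4 := d_parity v a b
    have hsum : d v a + d v b = D := by omega
    have hbtw : Btw a v b := by
      unfold Btw
      rw [d_comm a v]
      omega
    have hval : d a v = D / 2 ∨ d a v = R := by
      rw [d_comm a v]
      omega
    rcases hval with h | h
    · left; rw [hm1, ← h]; exact eq_seg_of_btw hbtw
    · right; rw [hm2, ← h]; exact eq_seg_of_btw hbtw
  -- the barycentre is exactly {m1, m2}
  have hbary : cayleyBarycentre n (cayleyHull n S) = {m1, m2} := by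
    rw [cayleyHull_eq, ← hH]
    ext v
    constructor
    · rintro ⟨hvH, hmin⟩
      have : cayleyEcc n H v ≤ R := le_trans (hmin m1 hm1H) ecc_m1
      rcases char v hvH this with rfl | rfl
      · exact Set.mem_insert _ _
      · exact Set.mem_insert_iff.2 (Or.inr rfl)
    · intro hv
      have hvH : v ∈ H := by
        rcases hv with rfl | hv
        · exact hm1H
        · rcases hv with rfl; exact hm2H
      have hecc : cayleyEcc n H v ≤ R := by
        rcases hv with rfl | hv
        · exact ecc_m1
        · rcases hv with rfl; exact ecc_m2
      exact ⟨hvH, fun u huH => le_trans hecc (ecc_ge u)⟩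
  -- distinguish vertex / edge
  by_cases hDpar : D / 2 = R
  · left
    refine ⟨m1, ?_⟩
    rw [hbary, hm2, ← hDpar, ← hm1]
    simp
  · right
    have hlt : D / 2 < R := by omega
    have hRle : R ≤ D := hk2
    have h12 : d m1 m2 = 1 := by
      have := d_of_btw_btw (btw_seg hk1) (btw_seg hk2) (by rw [hd1a, hd2a]; omega)
      rw [← hm1, ← hm2] at this
      rw [this, hd1a, hd2a]
      omega
    -- m2 = m1 * single letter
    have hw : m2 = m1 * FreeGroup.mk (m1⁻¹ * m2).toWord := by
      rw [FreeGroup.mk_toWord, mul_inv_cancel_left]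
    have hlen : (m1⁻¹ * m2).toWord.length = 1 := h12
    obtain ⟨c, hc⟩ : ∃ c, (m1⁻¹ * m2).toWord = [c] := by
      rcases e : (m1⁻¹ * m2).toWord with - | ⟨c, t⟩
      · rw [e] at hlen; simp at hlen
      · rw [e] at hlen
        simp only [List.length_cons, Nat.add_right_cancel_iff] at hlen
        have ht : t = [] := by simpa using hlen
        subst ht
        exact ⟨c, rfl⟩
    refine ⟨m1, c.1, c.2, ?_⟩
    rw [hbary]
    congr 1
    rw [hw, hc]

end Centre


/-! ### Equivariance -/

section Equivariance

variable {n : ℕ}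

lemma hull_smul (g : FreeGroup (Fin n)) (S : Set (FreeGroup (Fin n))) :
    cayleyHull n ((g * ·) '' S) = (g * ·) '' cayleyHull n S := by
  rw [cayleyHull_eq, cayleyHull_eq]
  ext v
  constructor
  · rintro ⟨-, ⟨x, hx, rfl⟩, -, ⟨y, hy, rfl⟩, hbtw⟩
    refine ⟨g⁻¹ * v, ⟨x, hx, y, hy, ?_⟩, by simp⟩
    have : Btw (g * x) (g * (g⁻¹ * v)) (g * y) := by
      simpa [mul_inv_cancel_left] using hbtw
    exact btw_left_inv.1 this
  · rintro ⟨u, ⟨x, hx, y, hy, hbtw⟩, rfl⟩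
    exact ⟨g * x, ⟨x, hx, rfl⟩, g * y, ⟨y, hy, rfl⟩, btw_left_inv.2 hbtw⟩

lemma ecc_smul (g : FreeGroup (Fin n)) (H : Set (FreeGroup (Fin n))) (v : FreeGroup (Fin n)) :
    cayleyEcc n ((g * ·) '' H) (g * v) = cayleyEcc n H v := by
  rw [cayleyEcc_eq, cayleyEcc_eq]
  congr 1
  rw [Set.image_image]
  apply Set.image_congr
  intro u _
  exact d_left_inv g v u

lemma bary_smul (g : FreeGroup (Fin n)) (H : Set (FreeGroup (Fin n))) :
    cayleyBarycentre n ((g * ·) '' H) = (g * ·) '' cayleyBarycentre n H := by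
  ext v
  constructor
  · rintro ⟨⟨u, huH, rfl⟩, hmin⟩
    refine ⟨u, ⟨huH, fun u' hu' => ?_⟩, rfl⟩
    have := hmin (g * u') ⟨u', hu', rfl⟩
    rwa [ecc_smul, ecc_smul] at this
  · rintro ⟨u, ⟨huH, hmin⟩, rfl⟩
    refine ⟨⟨u, huH, rfl⟩, ?_⟩
    rintro - ⟨u', hu', rfl⟩
    rw [ecc_smul, ecc_smul]
    exact hmin u' hu'

lemma hull_empty : cayleyHull n (∅ : Set (FreeGroup (Fin n))) = ∅ := by
  ext v
  simp [cayleyHull]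

lemma bary_subset (H : Set (FreeGroup (Fin n))) : cayleyBarycentre n H ⊆ H :=
  fun _ hv => hv.1

lemma of_ne_inv_of (i j : Fin n) : FreeGroup.of j ≠ (FreeGroup.of i)⁻¹ := by
  intro h
  have := congrArg FreeGroup.toWord h
  rw [FreeGroup.toWord_of, FreeGroup.toWord_inv, FreeGroup.toWord_of] at this
  simp [FreeGroup.invRev] at this

end Equivariance

end CayleyAux

open CayleyAux

/-- The maps whose support has an admissible convex hull in the Cayley tree —
i.e. whose barycentre is the vertex `e` or an edge `[e, a_i]` (together with the
constant map, whose support is empty) — form a complete set of representatives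
for the orbits of the left-translation action of `F_n` on the finitely supported
maps `F_n → F`: every finitely supported map lies in the orbit of exactly one
such map. -/
theorem admissible_maps_are_orbit_representatives
    (n : ℕ) (F : Type) [Finite F] (p : F)
    (f : FreeGroup (Fin n) → F) (hf : {x | f x ≠ p}.Finite) :
    ∃! g : FreeGroup (Fin n) → F,
      ({x | g x ≠ p}.Finite ∧
        ({x | g x ≠ p} = ∅ ∨
          cayleyBarycentre n (cayleyHull n {x | g x ≠ p}) = {1} ∨
          ∃ i : Fin n,
            cayleyBarycentre n (cayleyHull n {x | g x ≠ p}) = {1, FreeGroup.of i}))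
      ∧ ∃ w : FreeGroup (Fin n), (fun x => f (w⁻¹ * x)) = g := by
  classical
  set S : Set (FreeGroup (Fin n)) := {x | f x ≠ p} with hSdef
  have supp_eq : ∀ w : FreeGroup (Fin n), {x | f (w⁻¹ * x) ≠ p} = (w * ·) '' S := by
    intro w
    ext x
    constructor
    · intro hx
      exact ⟨w⁻¹ * x, hx, by simp [mul_inv_cancel_left]⟩
    · rintro ⟨y, hy, rfl⟩
      simpa [inv_mul_cancel_left] using (show f y ≠ p from hy)
  -- the uniqueness engine
  have key : ∀ w w' : FreeGroup (Fin n),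
      ({x | f (w⁻¹ * x) ≠ p} = ∅ ∨
        cayleyBarycentre n (cayleyHull n {x | f (w⁻¹ * x) ≠ p}) = {1} ∨
        ∃ i : Fin n, cayleyBarycentre n (cayleyHull n {x | f (w⁻¹ * x) ≠ p})
          = {1, FreeGroup.of i}) →
      ({x | f (w'⁻¹ * x) ≠ p} = ∅ ∨
        cayleyBarycentre n (cayleyHull n {x | f (w'⁻¹ * x) ≠ p}) = {1} ∨
        ∃ i : Fin n, cayleyBarycentre n (cayleyHull n {x | f (w'⁻¹ * x) ≠ p})
          = {1, FreeGroup.of i}) →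
      (fun x => f (w'⁻¹ * x)) = (fun x => f (w⁻¹ * x)) := by
    intro w w' h h'
    by_cases hS0 : S = ∅
    · have hp : ∀ y, f y = p := by
        intro y
        by_contra hy
        exact absurd (show y ∈ S from hy) (by rw [hS0]; exact Set.notMem_empty y)
      funext x
      rw [hp, hp]
    · have hSne : S.Nonempty := Set.nonempty_iff_ne_empty.2 hS0
      have hne1 : {x | f (w⁻¹ * x) ≠ p} ≠ ∅ := by
        rw [supp_eq]
        exact (hSne.image _).ne_empty
      have hne1' : {x | f (w'⁻¹ * x) ≠ p} ≠ ∅ := by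
        rw [supp_eq]
        exact (hSne.image _).ne_empty
      rcases h with h0 | hb
      · exact absurd h0 hne1
      rcases h' with h0 | hb'
      · exact absurd h0 hne1'
      set u := w' * w⁻¹ with hu
      have hrel : {x | f (w'⁻¹ * x) ≠ p} = (u * ·) '' {x | f (w⁻¹ * x) ≠ p} := by
        rw [supp_eq, supp_eq, Set.image_image]
        apply Set.image_congr
        intro y _
        rw [hu]
        group
      have hbar : cayleyBarycentre n (cayleyHull n {x | f (w'⁻¹ * x) ≠ p})
          = (u * ·) '' cayleyBarycentre n (cayleyHull n {x | f (w⁻¹ * x) ≠ p}) := by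
        rw [hrel, hull_smul, bary_smul]
      have hu1 : u = 1 := by
        rcases hb with hb | ⟨i, hb⟩ <;> rcases hb' with hb' | ⟨j, hb'⟩ <;>
          rw [hb, hb'] at hbar
        · rw [Set.image_singleton, mul_one] at hbar
          exact (Set.singleton_eq_singleton_iff.1 hbar).symm
        · rw [Set.image_singleton, mul_one] at hbar
          have h1 : (1 : FreeGroup (Fin n)) ∈ ({u} : Set _) := by
            rw [← hbar]; exact Set.mem_insert _ _
          have h2 : FreeGroup.of j ∈ ({u} : Set _) := by
            rw [← hbar]; exact Set.mem_insert_iff.2 (Or.inr rfl)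
          rw [Set.mem_singleton_iff] at h1 h2
          exact absurd (h2.trans h1.symm) (FreeGroup.of_ne_one j)
        · rw [Set.image_pair, mul_one] at hbar
          have h1 : u ∈ ({1} : Set (FreeGroup (Fin n))) := by
            rw [hbar]; exact Set.mem_insert _ _
          exact Set.mem_singleton_iff.1 h1
        · rw [Set.image_pair, mul_one] at hbar
          have h1 : u ∈ ({1, FreeGroup.of j} : Set (FreeGroup (Fin n))) := by
            rw [hbar]; exact Set.mem_insert _ _
          rcases h1 with h1 | h1
          · exact h1
          · -- u = of j; derive a contradiction
            exfalso
            have h2 : u * FreeGroup.of i ∈ ({1, FreeGroup.of j} : Set (FreeGroup (Fin n))) := by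
              rw [hbar]; exact Set.mem_insert_iff.2 (Or.inr rfl)
            rw [Set.mem_singleton_iff] at h1
            rcases h2 with h2 | h2
            · rw [h1] at h2
              exact of_ne_inv_of j i (eq_inv_of_mul_eq_one_right h2)
            · rw [Set.mem_singleton_iff, h1] at h2
              have : FreeGroup.of i = 1 := by
                have := mul_left_cancel (a := FreeGroup.of j)
                  (b := FreeGroup.of i) (c := 1) (by rw [mul_one, h2])
                exact this
              exact FreeGroup.of_ne_one i this
      have hww : w' = w := by
        have := hu1
        rw [hu, mul_inv_eq_one] at this
        exact this
      rw [hww]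
  -- existence
  obtain ⟨w, hw⟩ : ∃ w : FreeGroup (Fin n),
      ({x | f (w⁻¹ * x) ≠ p} = ∅ ∨
        cayleyBarycentre n (cayleyHull n {x | f (w⁻¹ * x) ≠ p}) = {1} ∨
        ∃ i : Fin n, cayleyBarycentre n (cayleyHull n {x | f (w⁻¹ * x) ≠ p})
          = {1, FreeGroup.of i}) := by
    by_cases hS0 : S = ∅
    · refine ⟨1, Or.inl ?_⟩
      rw [supp_eq, hS0, Set.image_empty]
    · have hSne : S.Nonempty := Set.nonempty_iff_ne_empty.2 hS0
      rcases centre_structure hf hSne with ⟨c, hc⟩ | ⟨c, i, bb, hc⟩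
      · refine ⟨c⁻¹, Or.inr (Or.inl ?_)⟩
        rw [supp_eq, hull_smul, bary_smul, hc, Set.image_singleton, inv_mul_cancel]
      · cases bb
        · -- the edge letter is an inverse generator
          refine ⟨(c * FreeGroup.mk [(i, false)])⁻¹, Or.inr (Or.inr ⟨i, ?_⟩)⟩
          rw [supp_eq, hull_smul, bary_smul, hc, Set.image_pair, Set.pair_comm]
          have hm : FreeGroup.mk [(i, false)] = (FreeGroup.of i)⁻¹ := by
            show FreeGroup.mk [(i, false)] = (FreeGroup.mk [(i, true)])⁻¹
            rw [FreeGroup.inv_mk]; rfl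
          have e2 : (c * FreeGroup.mk [(i, false)])⁻¹ * (c * FreeGroup.mk [(i, false)]) = 1 :=
            inv_mul_cancel _
          have e1 : (c * FreeGroup.mk [(i, false)])⁻¹ * c = FreeGroup.of i := by
            rw [hm]; group
          rw [e2, e1]
        · -- the edge letter is a generator
          refine ⟨c⁻¹, Or.inr (Or.inr ⟨i, ?_⟩)⟩
          rw [supp_eq, hull_smul, bary_smul, hc, Set.image_pair,
            inv_mul_cancel, inv_mul_cancel_left]
          rfl
  refine ⟨fun x => f (w⁻¹ * x), ⟨⟨?_, hw⟩, w, rfl⟩, ?_⟩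
  · show {x | f (w⁻¹ * x) ≠ p}.Finite
    rw [supp_eq]
    exact hf.image _
  · rintro g' ⟨⟨-, h'⟩, w', rfl⟩
    exact key w w' hw h'
end
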